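/- If Π̄⁻(0+) > 0, then limsup_{x↓0} A(x)/√(Π̄⁻(x)) < ∞. If Π̄⁻(0+) = 0 and Π̄⁺(0+) > 0, then limsup_{x↓0} A(x)/√(Π̄⁺(x)) < ∞. -/

import Mathlib

open MeasureTheory ProbabilityTheory Filter Set Topology

noncomputable section

namespace LevyPaper

/-- The jump of a real path at time `s`. -/
def jumpAt (f : ℝ → ℝ) (s : ℝ) : ℝ := f s - Function.leftLim f s

/-- Positive tail `Π̄⁺(x) = Π((x,∞))` of a Lévy measure. -/
def tailP (P : Measure ℝ) (x : ℝ) : ℝ := (P (Set.Ioi x)).toReal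

/-- Negative tail `Π̄⁻(x) = Π((−∞,−x))` of a Lévy measure. -/
def tailM (P : Measure ℝ) (x : ℝ) : ℝ := (P (Set.Iio (-x))).toReal

/-- Two-sided tail `Π̄ = Π̄⁺ + Π̄⁻`. -/
def tail (P : Measure ℝ) (x : ℝ) : ℝ := tailP P x + tailM P x

/-- Right-continuous inverse `g^←(x) = inf{y > 0 : g(y) ≤ x}` of a nonincreasing function. -/
def rInv (g : ℝ → ℝ) (x : ℝ) : ℝ := sInf {y : ℝ | 0 < y ∧ g y ≤ x}

/-- `Π` is a Lévy measure on `ℝ∖{0}`: no mass at `0` and `∫ (x² ∧ 1) Π(dx) < ∞`. -/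
def IsLevyMeasure (P : Measure ℝ) : Prop :=
  P {0} = 0 ∧ ∫⁻ x, ENNReal.ofReal (min (x ^ 2) 1) ∂P < ⊤

/-- The Lévy–Khintchine characteristic exponent of the triplet `(γ, σ², Π)`. -/
def charExponent (γ σ2 : ℝ) (P : Measure ℝ) (θ : ℝ) : ℂ :=
  Complex.I * θ * γ - σ2 * θ ^ 2 / 2 +
    ∫ x : ℝ, (Complex.exp (Complex.I * θ * x) - 1 -
      (if |x| ≤ 1 then Complex.I * θ * x else 0)) ∂P

variable {Ω : Type} [MeasureSpace Ω]

/-- `X` is a Lévy process with canonical triplet `(γ, σ², Π)` (paths extended by `0` to `t ≤ 0`):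
càdlàg paths, stationary independent increments, and characteristic function
`E e^{iθX_t} = e^{tΨ(θ)}`. -/
structure IsLevy (X : ℝ → Ω → ℝ) (γ σ2 : ℝ) (P : Measure ℝ) : Prop where
  isProb : IsProbabilityMeasure (ℙ : Measure Ω)
  levyMeasure : IsLevyMeasure P
  sigma_nonneg : 0 ≤ σ2
  meas : ∀ t, Measurable (X t)
  init : ∀ᵐ ω : Ω, ∀ t ≤ (0 : ℝ), X t ω = 0
  cadlag : ∀ᵐ ω : Ω, ∀ t : ℝ, ContinuousWithinAt (fun s => X s ω) (Set.Ici t) t ∧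
      ∃ l : ℝ, Tendsto (fun s => X s ω) (𝓝[<] t) (𝓝 l)
  indepIncrements : ∀ (n : ℕ) (t : Fin (n + 1) → ℝ), Monotone t →
      iIndepFun
        (fun i : Fin n => fun ω => X (t i.succ) ω - X (t i.castSucc) ω) ℙ
  statIncrements : ∀ s t : ℝ, 0 ≤ s → s ≤ t →
      IdentDistrib (fun ω => X t ω - X s ω) (X (t - s)) ℙ ℙ
  charFun : ∀ t : ℝ, 0 ≤ t → ∀ θ : ℝ,
      ∫ ω, Complex.exp (Complex.I * θ * X t ω) ∂ℙ = Complex.exp (t * charExponent γ σ2 P θ)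

/-- Sum of `g` of the jumps of `X` over `(0, t]`. -/
def jumpSum (X : ℝ → Ω → ℝ) (g : ℝ → ℝ) (t : ℝ) (ω : Ω) : ℝ :=
  ∑' s : Set.Ioc (0 : ℝ) t, g (jumpAt (fun u => X u ω) s)

/-- The quadratic variation `V_t = σ²t + ∑_{0<s≤t} (ΔX_s)²`. -/
def quadVar (X : ℝ → Ω → ℝ) (σ2 t : ℝ) (ω : Ω) : ℝ :=
  σ2 * t + jumpSum X (fun x => x ^ 2) t ω

/-- `sup_{0<s≤t} |ΔX_s|`. -/
def supAbsJump (X : ℝ → Ω → ℝ) (t : ℝ) (ω : Ω) : ℝ :=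
  sSup ((fun s => |jumpAt (fun u => X u ω) s|) '' Set.Ioc 0 t)

/-- `sup_{0<s≤t} ΔX_s⁺`. -/
def supPosJump (X : ℝ → Ω → ℝ) (t : ℝ) (ω : Ω) : ℝ :=
  sSup ((fun s => max (jumpAt (fun u => X u ω) s) 0) '' Set.Ioc 0 t)

/-- `sup_{0<s≤t} ΔX_s⁻`. -/
def supNegJump (X : ℝ → Ω → ℝ) (t : ℝ) (ω : Ω) : ℝ :=
  sSup ((fun s => max (-(jumpAt (fun u => X u ω) s)) 0) '' Set.Ioc 0 t)

/-- `sup_{0<s≤t} ΔX_s`. -/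
def supJump (X : ℝ → Ω → ℝ) (t : ℝ) (ω : Ω) : ℝ :=
  sSup ((fun s => jumpAt (fun u => X u ω) s) '' Set.Ioc 0 t)

/-- Winsorised first moment function
`A(x) = γ + Π̄⁺(1) − Π̄⁻(1) − ∫_x^1 (Π̄⁺(y) − Π̄⁻(y)) dy`. -/
def Afun (γ : ℝ) (P : Measure ℝ) (x : ℝ) : ℝ :=
  γ + tailP P 1 - tailM P 1 - ∫ y in x..1, (tailP P y - tailM P y)

/-- Winsorised second moment function `U(x) = σ² + 2∫_0^x y Π̄(y) dy`. -/
def Ufun (σ2 : ℝ) (P : Measure ℝ) (x : ℝ) : ℝ :=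
  σ2 + 2 * ∫ y in (0 : ℝ)..x, y * tail P y

/-- `X` is of bounded variation: `σ² = 0` and `∫_{|x|≤1} |x| Π(dx) < ∞`. -/
def BoundedVariation (σ2 : ℝ) (P : Measure ℝ) : Prop :=
  σ2 = 0 ∧ ∫⁻ x, ENNReal.ofReal (min |x| 1) ∂P < ⊤

/-- The drift `d_X = γ − ∫_{|x|≤1} x Π(dx)` of a bounded variation Lévy process. -/
def drift (γ : ℝ) (P : Measure ℝ) : ℝ := γ - ∫ x in {y : ℝ | |y| ≤ 1}, x ∂P

/-- `f` is slowly varying at `0`: `f(ux)/f(x) → 1` as `x ↓ 0`, for every `u > 0`. -/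
def SlowlyVaryingAt0 (f : ℝ → ℝ) : Prop :=
  ∀ u : ℝ, 0 < u → Tendsto (fun x => f (u * x) / f x) (𝓝[>] (0 : ℝ)) (𝓝 1)

/-- `T` enumerates, for each `t > 0`, the jump times of `X` in `(0,t]` in nonincreasing
order of jump modulus (covering all nonzero jumps); `T 0` carries the jump of largest
modulus, `T 1` the second largest, and so on. -/
def IsModOrderedJumpTimes (X : ℝ → Ω → ℝ) (T : ℕ → ℝ → Ω → ℝ) : Prop :=
  (∀ i t, Measurable (T i t)) ∧
  ∀ᵐ ω : Ω, ∀ t : ℝ, 0 < t →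
    Function.Injective (fun i => T i t ω) ∧
    (∀ i, T i t ω ∈ Set.Ioc 0 t) ∧
    (Antitone fun i => |jumpAt (fun u => X u ω) (T i t ω)|) ∧
    (∀ s ∈ Set.Ioc (0 : ℝ) t, jumpAt (fun u => X u ω) s ≠ 0 → ∃ i, T i t ω = s)

/-- `T` enumerates, for each `t > 0`, the positive jumps of `X` in `(0,t]` in nonincreasing
order (covering all positive jumps). -/
def IsPosOrderedJumpTimes (X : ℝ → Ω → ℝ) (T : ℕ → ℝ → Ω → ℝ) : Prop :=
  (∀ i t, Measurable (T i t)) ∧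
  ∀ᵐ ω : Ω, ∀ t : ℝ, 0 < t →
    Function.Injective (fun i => T i t ω) ∧
    (∀ i, T i t ω ∈ Set.Ioc 0 t) ∧
    (∀ i, 0 ≤ jumpAt (fun u => X u ω) (T i t ω)) ∧
    (Antitone fun i => jumpAt (fun u => X u ω) (T i t ω)) ∧
    (∀ s ∈ Set.Ioc (0 : ℝ) t, 0 < jumpAt (fun u => X u ω) s → ∃ i, T i t ω = s)

/-- The jump associated with the `(r+1)`-st order statistic (so `ordJump X T 0` is the
largest). -/
def ordJump (X : ℝ → Ω → ℝ) (T : ℕ → ℝ → Ω → ℝ) (r : ℕ) (t : ℝ) (ω : Ω) : ℝ :=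
  jumpAt (fun u => X u ω) (T r t ω)

/-- `Y` is a unit-rate Poisson process. -/
def IsPoissonProcess (Y : ℝ → Ω → ℕ) : Prop :=
  (∀ t, Measurable (Y t)) ∧
  (∀ᵐ ω : Ω, Y 0 ω = 0 ∧ ∀ s t : ℝ, 0 ≤ s → s ≤ t → Y s ω ≤ Y t ω) ∧
  (∀ (n : ℕ) (t : Fin (n + 1) → ℝ), (∀ i, 0 ≤ t i) → Monotone t →
      iIndepFun
        (fun i : Fin n => fun ω => Y (t i.succ) ω - Y (t i.castSucc) ω) ℙ) ∧
  (∀ s t : ℝ, 0 ≤ s → s ≤ t →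
      Measure.map (fun ω => Y t ω - Y s ω) ℙ = (poissonPMF (t - s).toNNReal).toMeasure)

/-- `Π({y})`, as a real number. -/
def atom (P : Measure ℝ) (y : ℝ) : ℝ := (P {y}).toReal

/-- The left limit `Π̄(y−) = Π([y,∞)) + Π((−∞,−y])` of the two-sided tail. -/
def tailLeft (P : Measure ℝ) (y : ℝ) : ℝ := (P (Set.Ici y)).toReal + (P (Set.Iic (-y))).toReal

/-- `ΔΠ̄(y) = Π̄(y−) − Π̄(y) = Π({y}) + Π({−y})`. -/
def atomTail (P : Measure ℝ) (y : ℝ) : ℝ := atom P y + atom P (-y)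

/-- `κ⁺(v)` of the paper. -/
def kappaP (P : Measure ℝ) (v : ℝ) : ℝ :=
  if atomTail P (rInv (tail P) v) ≠ 0 then
    (tailLeft P (rInv (tail P) v) - v) * atom P (rInv (tail P) v) / atomTail P (rInv (tail P) v)
  else 0

/-- `κ⁻(v)` of the paper. -/
def kappaM (P : Measure ℝ) (v : ℝ) : ℝ :=
  if atomTail P (rInv (tail P) v) ≠ 0 then
    (tailLeft P (rInv (tail P) v) - v) * atom P (-(rInv (tail P) v)) / atomTail P (rInv (tail P) v)
  else 0

/-- `κ(v) = Π̄⁺(Π̄^{+,←}(v)−) − v` of the paper. -/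
def kappaPos (P : Measure ℝ) (v : ℝ) : ℝ := (P (Set.Ici (rInv (tailP P) v))).toReal - v

/-- The process `X̃ᵛ`: `X` with all jumps of modulus `≥ Π̄^←(v)` removed. -/
def truncModX (X : ℝ → Ω → ℝ) (P : Measure ℝ) (v t : ℝ) (ω : Ω) : ℝ :=
  X t ω - jumpSum X (fun x => if rInv (tail P) v ≤ |x| then x else 0) t ω

/-- The process `Ṽᵛ`: `V` with all squared jumps of modulus `≥ Π̄^←(v)` removed. -/
def truncModV (X : ℝ → Ω → ℝ) (σ2 : ℝ) (P : Measure ℝ) (v t : ℝ) (ω : Ω) : ℝ :=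
  quadVar X σ2 t ω - jumpSum X (fun x => if rInv (tail P) v ≤ |x| then x ^ 2 else 0) t ω

/-- The process `Xᵛ`: `X` with all jumps `≥ Π̄^{+,←}(v)` removed. -/
def truncPosX (X : ℝ → Ω → ℝ) (P : Measure ℝ) (v t : ℝ) (ω : Ω) : ℝ :=
  X t ω - jumpSum X (fun x => if rInv (tailP P) v ≤ x then x else 0) t ω

/-- The process `Vᵛ`: `V` with all squared jumps `≥ Π̄^{+,←}(v)` removed. -/
def truncPosV (X : ℝ → Ω → ℝ) (σ2 : ℝ) (P : Measure ℝ) (v t : ℝ) (ω : Ω) : ℝ :=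
  quadVar X σ2 t ω - jumpSum X (fun x => if rInv (tailP P) v ≤ x then x ^ 2 else 0) t ω

/-- Convergence in probability to a constant, as `t ↓ 0`. -/
def TendstoInProbAt0 (Z : ℝ → Ω → ℝ) (c : ℝ) : Prop :=
  ∀ ε : ℝ, 0 < ε →
    Tendsto (fun t => (ℙ : Measure Ω) {ω | ε < |Z t ω - c|}) (𝓝[>] (0 : ℝ)) (𝓝 0)

/-- Convergence in probability to a constant, along a sequence. -/
def TendstoInProbSeq (Z : ℕ → Ω → ℝ) (c : ℝ) : Prop :=
  ∀ ε : ℝ, 0 < ε →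
    Tendsto (fun k => (ℙ : Measure Ω) {ω | ε < |Z k ω - c|}) atTop (𝓝 0)

/-- `N_t / D_t → c` in probability as `t ↓ 0` (stated in multiplied form, for a.s. positive
denominators). -/
def RatioToConstInProbAt0 (N D : ℝ → Ω → ℝ) (c : ℝ) : Prop :=
  ∀ ε : ℝ, 0 < ε →
    Tendsto (fun t => (ℙ : Measure Ω) {ω | ε * |D t ω| < |N t ω - c * D t ω|})
      (𝓝[>] (0 : ℝ)) (𝓝 0)

/-- `N_t / D_t → ∞` in probability as `t ↓ 0` (stated in multiplied form, for a.s. positive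
denominators). -/
def RatioToTopInProbAt0 (N D : ℝ → Ω → ℝ) : Prop :=
  ∀ M : ℝ, Tendsto (fun t => (ℙ : Measure Ω) {ω | N t ω ≤ M * D t ω}) (𝓝[>] (0 : ℝ)) (𝓝 0)

/-- `N_{t_k} / D_{t_k} → ∞` in probability as `k → ∞`. -/
def RatioToTopInProbSeq (N D : ℝ → Ω → ℝ) (tk : ℕ → ℝ) : Prop :=
  ∀ M : ℝ, Tendsto (fun k => (ℙ : Measure Ω) {ω | N (tk k) ω ≤ M * D (tk k) ω}) atTop (𝓝 0)

/-- Convergence in distribution to the standard normal law, along a filter on the time axis. -/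
def ConvToStdNormal (Z : ℝ → Ω → ℝ) (l : Filter ℝ) : Prop :=
  ∀ f : BoundedContinuousFunction ℝ ℝ,
    Tendsto (fun t => ∫ ω, f (Z t ω) ∂(ℙ : Measure Ω)) l (𝓝 (∫ x, f x ∂gaussianReal 0 1))

/-- Convergence in distribution to the standard normal law, along a sequence. -/
def ConvToStdNormalSeq (Z : ℕ → Ω → ℝ) : Prop :=
  ∀ f : BoundedContinuousFunction ℝ ℝ,
    Tendsto (fun k => ∫ ω, f (Z k ω) ∂(ℙ : Measure Ω)) atTop (𝓝 (∫ x, f x ∂gaussianReal 0 1))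

/-- `X` is positively relatively stable at `0`. -/
def PRSAt0 (X : ℝ → Ω → ℝ) : Prop :=
  ∃ b : ℝ → ℝ, (∀ t : ℝ, 0 < t → 0 < b t) ∧
    TendstoInProbAt0 (fun t ω => X t ω / b t) 1

/-- `X` is relatively stable at `0`. -/
def RSAt0 (X : ℝ → Ω → ℝ) : Prop :=
  ∃ b : ℝ → ℝ, (∀ t : ℝ, 0 < t → 0 < b t) ∧
    (TendstoInProbAt0 (fun t ω => X t ω / b t) 1 ∨
      TendstoInProbAt0 (fun t ω => X t ω / b t) (-1))

/-- `X` is positively subsequentially relatively stable at `0`. -/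
def PSRSAt0 (X : ℝ → Ω → ℝ) : Prop :=
  ∃ tk bk : ℕ → ℝ, (∀ k, 0 < tk k) ∧ Tendsto tk atTop (𝓝 0) ∧ (∀ k, 0 < bk k) ∧
    TendstoInProbSeq (fun k ω => X (tk k) ω / bk k) 1

/-- `X` is subsequentially relatively stable at `0`. -/
def SRSAt0 (X : ℝ → Ω → ℝ) : Prop :=
  ∃ tk bk : ℕ → ℝ, (∀ k, 0 < tk k) ∧ Tendsto tk atTop (𝓝 0) ∧ (∀ k, 0 < bk k) ∧
    (TendstoInProbSeq (fun k ω => X (tk k) ω / bk k) 1 ∨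
      TendstoInProbSeq (fun k ω => X (tk k) ω / bk k) (-1))

/-- `X ∈ D(N)` at `0`: attraction to normality with general centering. -/
def DomNormalAt0 (X : ℝ → Ω → ℝ) : Prop :=
  ∃ a b : ℝ → ℝ, (∀ t : ℝ, 0 < t → 0 < b t) ∧
    ConvToStdNormal (fun t ω => (X t ω - a t) / b t) (𝓝[>] (0 : ℝ))

/-- `X ∈ D₀(N)` at `0`: attraction to normality without centering. -/
def Dom0NormalAt0 (X : ℝ → Ω → ℝ) : Prop :=
  ∃ b : ℝ → ℝ, (∀ t : ℝ, 0 < t → 0 < b t) ∧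
    ConvToStdNormal (fun t ω => X t ω / b t) (𝓝[>] (0 : ℝ))

/-- `X ∈ D_{P0}(N)` at `0`: subsequential attraction to normality without centering, with
norming sequence tending to `0`. -/
def DomP0NormalAt0 (X : ℝ → Ω → ℝ) : Prop :=
  ∃ tk bk : ℕ → ℝ, (∀ k, 0 < tk k) ∧ Tendsto tk atTop (𝓝 0) ∧
    (∀ k, 0 < bk k) ∧ Tendsto bk atTop (𝓝 0) ∧
    ConvToStdNormalSeq (fun k ω => X (tk k) ω / bk k)

/-- `X` is a subordinator: a.s. nondecreasing paths. -/
def IsSubordinator (X : ℝ → Ω → ℝ) : Prop :=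
  ∀ᵐ ω : Ω, MonotoneOn (fun s => X s ω) (Set.Ici (0 : ℝ))

/-- `limsup_{x↓0} f(x) = ∞`. -/
def LimsupTopAt0 (f : ℝ → ℝ) : Prop := ∀ C : ℝ, ∃ᶠ x in 𝓝[>] (0 : ℝ), C < f x

/-- `limsup_{x↓0} f(x) < ∞`. -/
def LimsupBddAt0 (f : ℝ → ℝ) : Prop := ∃ C : ℝ, ∀ᶠ x in 𝓝[>] (0 : ℝ), f x ≤ C

end LevyPaper

open LevyPaper


section Lemma43Helpers

open MeasureTheory Set Filter Topology intervalIntegral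

variable {P : Measure ℝ}

private lemma levy_tail_bound (hP : IsLevyMeasure P) {x : ℝ} (hx : 0 < x) (hx1 : x ≤ 1)
    {S : Set ℝ} (hSsub : ∀ u ∈ S, x ^ 2 ≤ min (u ^ 2) 1) :
    ENNReal.ofReal (x ^ 2) * P S ≤ ∫⁻ u, ENNReal.ofReal (min (u ^ 2) 1) ∂P := by
  calc ENNReal.ofReal (x ^ 2) * P S = ∫⁻ _ in S, ENNReal.ofReal (x ^ 2) ∂P := by
        rw [setLIntegral_const, mul_comm]
    _ ≤ ∫⁻ u in S, ENNReal.ofReal (min (u ^ 2) 1) ∂P :=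
        setLIntegral_mono (by measurability) fun u hu => ENNReal.ofReal_le_ofReal (hSsub u hu)
    _ ≤ _ := setLIntegral_le_lintegral _ _

private lemma memM {x : ℝ} (hx : 0 < x) (hx1 : x ≤ 1) :
    ∀ u ∈ Set.Iio (-x), x ^ 2 ≤ min (u ^ 2) 1 := by
  intro u hu
  simp only [Set.mem_Iio] at hu
  have h1 : x ^ 2 ≤ u ^ 2 := by nlinarith
  have h2 : x ^ 2 ≤ 1 := by nlinarith
  exact le_min h1 h2

private lemma memP {x : ℝ} (hx : 0 < x) (hx1 : x ≤ 1) :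
    ∀ u ∈ Set.Ioi x, x ^ 2 ≤ min (u ^ 2) 1 := by
  intro u hu
  simp only [Set.mem_Ioi] at hu
  have h1 : x ^ 2 ≤ u ^ 2 := by nlinarith
  have h2 : x ^ 2 ≤ 1 := by nlinarith
  exact le_min h1 h2

private lemma fin_of_bound (hP : IsLevyMeasure P) {x : ℝ} (hx : 0 < x)
    {S : Set ℝ} (hb : ENNReal.ofReal (x ^ 2) * P S ≤ ∫⁻ u, ENNReal.ofReal (min (u ^ 2) 1) ∂P) :
    P S < ⊤ := by
  by_contra h
  rw [not_lt, top_le_iff] at h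
  rw [h, ENNReal.mul_top (by simp [ENNReal.ofReal_eq_zero]; nlinarith)] at hb
  exact absurd (top_le_iff.mp hb) hP.2.ne

private lemma tailM_fin (hP : IsLevyMeasure P) {x : ℝ} (hx : 0 < x) : P (Set.Iio (-x)) < ⊤ := by
  rcases le_or_gt x 1 with h1 | h1
  · exact fin_of_bound hP hx (levy_tail_bound hP hx h1 (memM hx h1))
  · refine lt_of_le_of_lt (measure_mono (fun u hu => ?_))
      (fin_of_bound hP one_pos (levy_tail_bound hP one_pos le_rfl (memM one_pos le_rfl)))
    simp only [Set.mem_Iio] at hu ⊢; linarith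

private lemma tailP_fin (hP : IsLevyMeasure P) {x : ℝ} (hx : 0 < x) : P (Set.Ioi x) < ⊤ := by
  rcases le_or_gt x 1 with h1 | h1
  · exact fin_of_bound hP hx (levy_tail_bound hP hx h1 (memP hx h1))
  · refine lt_of_le_of_lt (measure_mono (fun u hu => ?_))
      (fin_of_bound hP one_pos (levy_tail_bound hP one_pos le_rfl (memP one_pos le_rfl)))
    simp only [Set.mem_Ioi] at hu ⊢; linarith

private lemma sq_mul_tailM_le (hP : IsLevyMeasure P) {x : ℝ} (hx : 0 < x) (hx1 : x ≤ 1) :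
    x ^ 2 * tailM P x ≤ (∫⁻ u, ENNReal.ofReal (min (u ^ 2) 1) ∂P).toReal := by
  have hb := levy_tail_bound hP hx hx1 (memM hx hx1)
  have := ENNReal.toReal_mono hP.2.ne hb
  rwa [ENNReal.toReal_mul, ENNReal.toReal_ofReal (by positivity)] at this

private lemma tailM_anti (hP : IsLevyMeasure P) {x y : ℝ} (hx : 0 < x) (hxy : x ≤ y) :
    tailM P y ≤ tailM P x := by
  refine ENNReal.toReal_mono (tailM_fin hP hx).ne (measure_mono (fun u hu => ?_))
  simp only [Set.mem_Iio] at hu ⊢; linarith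

private lemma tailP_anti (hP : IsLevyMeasure P) {x y : ℝ} (hx : 0 < x) (hxy : x ≤ y) :
    tailP P y ≤ tailP P x := by
  refine ENNReal.toReal_mono (tailP_fin hP hx).ne (measure_mono (fun u hu => ?_))
  simp only [Set.mem_Ioi] at hu ⊢; linarith

private lemma tailM_nonneg (x : ℝ) : 0 ≤ tailM P x := ENNReal.toReal_nonneg

private lemma tailP_nonneg (x : ℝ) : 0 ≤ tailP P x := ENNReal.toReal_nonneg

private lemma tailM_intInt (hP : IsLevyMeasure P) {a b : ℝ} (ha : 0 < a) (hab : a ≤ b) :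
    IntervalIntegrable (tailM P) volume a b := by
  refine AntitoneOn.intervalIntegrable (fun u hu v hv huv => ?_)
  rw [Set.uIcc_of_le hab] at hu hv
  exact tailM_anti hP (lt_of_lt_of_le ha hu.1) huv

private lemma tailP_intInt (hP : IsLevyMeasure P) {a b : ℝ} (ha : 0 < a) (hab : a ≤ b) :
    IntervalIntegrable (tailP P) volume a b := by
  refine AntitoneOn.intervalIntegrable (fun u hu v hv huv => ?_)
  rw [Set.uIcc_of_le hab] at hu hv
  exact tailP_anti hP (lt_of_lt_of_le ha hu.1) huv

private lemma diff_intInt (hP : IsLevyMeasure P) {a b : ℝ} (ha : 0 < a) (hab : a ≤ b) :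
    IntervalIntegrable (fun y => tailP P y - tailM P y) volume a b :=
  (tailP_intInt hP ha hab).sub (tailM_intInt hP ha hab)

private lemma Afun_split (γ : ℝ) (hP : IsLevyMeasure P) {x x₁ : ℝ} (hx : 0 < x)
    (hxx : x ≤ x₁) (hx1 : x₁ ≤ 1) :
    Afun γ P x = Afun γ P x₁ - ∫ y in x..x₁, (tailP P y - tailM P y) := by
  have h1 : (∫ y in x..x₁, (tailP P y - tailM P y)) + ∫ y in x₁..1, (tailP P y - tailM P y)
      = ∫ y in x..1, (tailP P y - tailM P y) :=
    intervalIntegral.integral_add_adjacent_intervals (diff_intInt hP hx hxx)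
      (diff_intInt hP (lt_of_lt_of_le hx hxx) hx1)
  unfold Afun
  linarith [h1]

/-- Core analytic bound: `∫_x^{x₁} Π̄⁻(y) dy ≤ 2 √C √(Π̄⁻(x))`. -/
private lemma integral_tailM_le (hP : IsLevyMeasure P) {x x₁ : ℝ} (hx : 0 < x)
    (hxx : x ≤ x₁) (hx1 : x₁ ≤ 1) (ht : 0 < tailM P x) :
    ∫ y in x..x₁, tailM P y ≤
      2 * Real.sqrt (∫⁻ u, ENNReal.ofReal (min (u ^ 2) 1) ∂P).toReal
        * Real.sqrt (tailM P x) := by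
  set C := (∫⁻ u, ENNReal.ofReal (min (u ^ 2) 1) ∂P).toReal with hCdef
  set t := tailM P x with htdef
  have hx2C : x ^ 2 * t ≤ C := sq_mul_tailM_le hP hx (le_trans hxx hx1)
  have hC : 0 < C := lt_of_lt_of_le (by positivity) hx2C
  set s := Real.sqrt (C / t) with hsdef
  have hs : 0 < s := Real.sqrt_pos.mpr (by positivity)
  have hxs : x ≤ s := by
    rw [hsdef, Real.le_sqrt hx.le (by positivity)]
    rw [le_div_iff₀ ht]
    linarith
  set m := min x₁ s with hmdef
  have hxm : x ≤ m := le_min hxx hxs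
  have hm0 : 0 < m := lt_of_lt_of_le hx hxm
  have hmx₁ : m ≤ x₁ := min_le_left _ _
  have hst : s * t = Real.sqrt C * Real.sqrt t := by
    rw [hsdef, Real.sqrt_div hC.le]
    rw [div_mul_eq_mul_div, mul_comm, ← div_mul_eq_mul_div]
    rw [Real.div_sqrt]
    ring
  -- split the integral
  have hsplit : (∫ y in x..m, tailM P y) + ∫ y in m..x₁, tailM P y = ∫ y in x..x₁, tailM P y :=
    intervalIntegral.integral_add_adjacent_intervals
      (tailM_intInt hP hx hxm) (tailM_intInt hP hm0 hmx₁)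
  -- first piece
  have h1 : ∫ y in x..m, tailM P y ≤ Real.sqrt C * Real.sqrt t := by
    have hle : ∫ y in x..m, tailM P y ≤ ∫ _ in x..m, t := by
      refine intervalIntegral.integral_mono_on hxm (tailM_intInt hP hx hxm)
        intervalIntegrable_const (fun u hu => tailM_anti hP hx hu.1)
    rw [intervalIntegral.integral_const, smul_eq_mul] at hle
    have : (m - x) * t ≤ s * t := by
      have : m - x ≤ s := by
        have := min_le_right x₁ s; linarith
      nlinarith
    have hfin := le_trans hle this
    linarith [hst, hfin]
  -- second piece
  have h2 : ∫ y in m..x₁, tailM P y ≤ Real.sqrt C * Real.sqrt t := by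
    rcases le_or_gt x₁ s with hcase | hcase
    · -- m = x₁, degenerate
      have hm : m = x₁ := min_eq_left hcase
      rw [hm, intervalIntegral.integral_same]
      positivity
    · have hm : m = s := min_eq_right hcase.le
      have hpt : ∀ u ∈ Set.Icc m x₁, tailM P u ≤ C / u ^ 2 := by
        intro u hu
        have hu0 : 0 < u := lt_of_lt_of_le hm0 hu.1
        rw [le_div_iff₀ (by positivity)]
        calc tailM P u * u ^ 2 = u ^ 2 * tailM P u := by ring
          _ ≤ C := sq_mul_tailM_le hP hu0 (le_trans hu.2 hx1)
      have hint2 : IntervalIntegrable (fun u => C / u ^ 2) volume m x₁ := by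
        apply ContinuousOn.intervalIntegrable
        apply ContinuousOn.div continuousOn_const (by fun_prop)
        intro u hu
        rw [Set.uIcc_of_le hmx₁] at hu
        have : 0 < u := lt_of_lt_of_le hm0 hu.1
        positivity
      have hle : ∫ y in m..x₁, tailM P y ≤ ∫ y in m..x₁, C / y ^ 2 :=
        intervalIntegral.integral_mono_on hmx₁ (tailM_intInt hP hm0 hmx₁) hint2 hpt
      have hval : ∫ y in m..x₁, C / y ^ 2 = C * (1 / m - 1 / x₁) := by
        have hz : (0:ℝ) ∉ Set.uIcc m x₁ := by
          rw [Set.uIcc_of_le hmx₁]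
          intro hmem
          exact absurd hmem.1 (not_le.mpr hm0)
        have : ∫ y in m..x₁, (y : ℝ) ^ (-2 : ℤ) = (x₁ ^ ((-2:ℤ) + 1) - m ^ ((-2:ℤ) + 1)) / ((-2:ℤ) + 1) :=
          integral_zpow (Or.inr ⟨by norm_num, hz⟩)
        have heq : ∀ y : ℝ, y ≠ 0 → C / y ^ 2 = C * y ^ (-2 : ℤ) := by
          intro y hy
          have e : (y:ℝ) ^ (-2 : ℤ) = (y ^ 2)⁻¹ := by
            rw [zpow_neg]
            norm_cast
          rw [e, div_eq_mul_inv]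
        rw [intervalIntegral.integral_congr (g := fun y => C * y ^ (-2:ℤ)) ?_]
        · rw [intervalIntegral.integral_const_mul, this]
          have hm' : m ≠ 0 := hm0.ne'
          have hx₁' : (x₁:ℝ) ≠ 0 := (lt_of_lt_of_le hm0 hmx₁).ne'
          norm_num [zpow_neg]
          exact Or.inl (by ring)
        · intro y hy
          exact heq y (fun h => hz (h ▸ hy))
      have hfin : C * (1 / m - 1 / x₁) ≤ Real.sqrt C * Real.sqrt t := by
        have h1m : C * (1 / m - 1 / x₁) ≤ C / m := by
          have hx₁0 : 0 < x₁ := lt_of_lt_of_le hm0 hmx₁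
          have : 0 ≤ C / x₁ := by positivity
          rw [mul_sub]
          rw [mul_one_div, mul_one_div]
          linarith
        have h2m : C / m = Real.sqrt C * Real.sqrt t := by
          have hsC : Real.sqrt C ≠ 0 := (Real.sqrt_pos.mpr hC).ne'
          have hsc : Real.sqrt C * Real.sqrt C = C := Real.mul_self_sqrt hC.le
          rw [hm, hsdef, Real.sqrt_div hC.le, div_div_eq_mul_div, div_eq_iff hsC]
          linear_combination (- Real.sqrt t) * hsc
        linarith
      linarith
  linarith

end Lemma43Helpers

/-- **Lemma 4.3.** If `Π̄⁻(0+) > 0`, then `limsup_{x↓0} A(x)/√Π̄⁻(x) < ∞`. If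
`Π̄⁻(0+) = 0` and `Π̄⁺(0+) > 0`, then `limsup_{x↓0} A(x)/√Π̄⁺(x) < ∞`. -/
theorem statement_12 (γ : ℝ) (P : Measure ℝ) (hP : IsLevyMeasure P) :
    (P (Set.Iio (0 : ℝ)) ≠ 0 →
      LimsupBddAt0 (fun x => Afun γ P x / Real.sqrt (tailM P x))) ∧
    (P (Set.Iio (0 : ℝ)) = 0 → P (Set.Ioi (0 : ℝ)) ≠ 0 →
      LimsupBddAt0 (fun x => Afun γ P x / Real.sqrt (tailP P x))) := by
  constructor
  · -- Case 1: Π̄⁻(0+) > 0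
    intro hM
    -- find x₁ ∈ (0,1] with P (Iio (-x₁)) ≠ 0
    obtain ⟨x₁, hx₁0, hx₁1, hx₁ne⟩ : ∃ x₁ : ℝ, 0 < x₁ ∧ x₁ ≤ 1 ∧ P (Set.Iio (-x₁)) ≠ 0 := by
      by_contra hcon
      push_neg at hcon
      apply hM
      have hsub : Set.Iio (0:ℝ) ⊆ ⋃ n : ℕ, Set.Iio (-(1 / (n + 1) : ℝ)) := by
        intro u hu
        simp only [Set.mem_Iio] at hu
        obtain ⟨n, hn⟩ := exists_nat_one_div_lt (show (0:ℝ) < -u by linarith)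
        exact Set.mem_iUnion.mpr ⟨n, by simp only [Set.mem_Iio]; linarith⟩
      refine measure_mono_null hsub (measure_iUnion_null fun n => ?_)
      have h0 : (0:ℝ) < 1 / (n + 1) := by positivity
      have h1 : (1:ℝ) / (n + 1) ≤ 1 := by
        rw [div_le_one (by positivity)]
        have : (0:ℝ) ≤ (n:ℝ) := Nat.cast_nonneg n
        linarith
      exact hcon _ h0 h1
    have ht₁ : 0 < tailM P x₁ :=
      ENNReal.toReal_pos hx₁ne (tailM_fin hP hx₁0).ne
    set c := Real.sqrt (tailM P x₁) with hcdef
    have hc : 0 < c := Real.sqrt_pos.mpr ht₁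
    set C := (∫⁻ u, ENNReal.ofReal (min (u ^ 2) 1) ∂P).toReal with hCdef
    refine ⟨|Afun γ P x₁| / c + 2 * Real.sqrt C, ?_⟩
    filter_upwards [Ioo_mem_nhdsGT_of_mem (Set.left_mem_Ico.mpr hx₁0)] with x hx
    obtain ⟨hx0, hxx₁⟩ := hx
    have htx : tailM P x₁ ≤ tailM P x := tailM_anti hP hx0 hxx₁.le
    have htx0 : 0 < tailM P x := lt_of_lt_of_le ht₁ htx
    have hsx : c ≤ Real.sqrt (tailM P x) := Real.sqrt_le_sqrt htx
    have hsx0 : 0 < Real.sqrt (tailM P x) := lt_of_lt_of_le hc hsx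
    -- key bound on Afun
    have hkey : Afun γ P x ≤ Afun γ P x₁ + 2 * Real.sqrt C * Real.sqrt (tailM P x) := by
      rw [Afun_split γ hP hx0 hxx₁.le hx₁1]
      have hlb : -(∫ y in x..x₁, tailM P y) ≤ ∫ y in x..x₁, (tailP P y - tailM P y) := by
        rw [← intervalIntegral.integral_neg]
        refine intervalIntegral.integral_mono_on hxx₁.le
          ((tailM_intInt hP hx0 hxx₁.le).neg) (diff_intInt hP hx0 hxx₁.le) (fun u hu => ?_)
        have := tailP_nonneg (P := P) u
        simp only [neg_le_sub_iff_le_add]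
        linarith
      have hub := integral_tailM_le hP hx0 hxx₁.le hx₁1 htx0
      linarith
    rw [div_le_iff₀ hsx0]
    have hA1 : Afun γ P x₁ ≤ |Afun γ P x₁| := le_abs_self _
    have habs : |Afun γ P x₁| = (|Afun γ P x₁| / c) * c := by field_simp
    have h2 : (|Afun γ P x₁| / c) * c ≤ (|Afun γ P x₁| / c) * Real.sqrt (tailM P x) := by
      have : 0 ≤ |Afun γ P x₁| / c := by positivity
      nlinarith
    calc Afun γ P x ≤ Afun γ P x₁ + 2 * Real.sqrt C * Real.sqrt (tailM P x) := hkey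
      _ ≤ (|Afun γ P x₁| / c) * Real.sqrt (tailM P x)
          + 2 * Real.sqrt C * Real.sqrt (tailM P x) := by
          rw [habs] at hA1; linarith
      _ = (|Afun γ P x₁| / c + 2 * Real.sqrt C) * Real.sqrt (tailM P x) := by ring
  · -- Case 2: Π̄⁻(0+) = 0, Π̄⁺(0+) > 0
    intro hM hPp
    have hM0 : ∀ y : ℝ, 0 ≤ y → tailM P y = 0 := by
      intro y hy
      have : P (Set.Iio (-y)) = 0 := by
        refine measure_mono_null (fun u hu => ?_) hM
        simp only [Set.mem_Iio] at hu ⊢; linarith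
      simp [tailM, this]
    obtain ⟨x₁, hx₁0, hx₁1, hx₁ne⟩ : ∃ x₁ : ℝ, 0 < x₁ ∧ x₁ ≤ 1 ∧ P (Set.Ioi x₁) ≠ 0 := by
      by_contra hcon
      push_neg at hcon
      apply hPp
      have hsub : Set.Ioi (0:ℝ) ⊆ ⋃ n : ℕ, Set.Ioi ((1 / (n + 1) : ℝ)) := by
        intro u hu
        simp only [Set.mem_Ioi] at hu
        obtain ⟨n, hn⟩ := exists_nat_one_div_lt hu
        exact Set.mem_iUnion.mpr ⟨n, by simp only [Set.mem_Ioi]; linarith⟩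
      refine measure_mono_null hsub (measure_iUnion_null fun n => ?_)
      have h0 : (0:ℝ) < 1 / (n + 1) := by positivity
      have h1 : (1:ℝ) / (n + 1) ≤ 1 := by
        rw [div_le_one (by positivity)]
        have : (0:ℝ) ≤ (n:ℝ) := Nat.cast_nonneg n
        linarith
      exact hcon _ h0 h1
    have ht₁ : 0 < tailP P x₁ :=
      ENNReal.toReal_pos hx₁ne (tailP_fin hP hx₁0).ne
    set c := Real.sqrt (tailP P x₁) with hcdef
    have hc : 0 < c := Real.sqrt_pos.mpr ht₁
    refine ⟨|Afun γ P x₁| / c, ?_⟩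
    filter_upwards [Ioo_mem_nhdsGT_of_mem (Set.left_mem_Ico.mpr hx₁0)] with x hx
    obtain ⟨hx0, hxx₁⟩ := hx
    have htx : tailP P x₁ ≤ tailP P x := tailP_anti hP hx0 hxx₁.le
    have hsx : c ≤ Real.sqrt (tailP P x) := Real.sqrt_le_sqrt htx
    have hsx0 : 0 < Real.sqrt (tailP P x) := lt_of_lt_of_le hc hsx
    have hkey : Afun γ P x ≤ Afun γ P x₁ := by
      rw [Afun_split γ hP hx0 hxx₁.le hx₁1]
      have hnn : 0 ≤ ∫ y in x..x₁, (tailP P y - tailM P y) := by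
        refine intervalIntegral.integral_nonneg hxx₁.le (fun u hu => ?_)
        rw [hM0 u (le_trans hx0.le hu.1), sub_zero]
        exact tailP_nonneg u
      linarith
    rw [div_le_iff₀ hsx0]
    have hA1 : Afun γ P x₁ ≤ |Afun γ P x₁| := le_abs_self _
    have habs : |Afun γ P x₁| = (|Afun γ P x₁| / c) * c := by field_simp
    have h2 : (|Afun γ P x₁| / c) * c ≤ (|Afun γ P x₁| / c) * Real.sqrt (tailP P x) := by
      have : 0 ≤ |Afun γ P x₁| / c := by positivity
      nlinarith
    rw [habs] at hA1
    linarith
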